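/- For a convex proper subdomain G of ℝⁿ and all x, y ∈ G, s_G(x,y) ≤ √2·j*_G(x,y). -/

import Mathlib

open Metric Set

noncomputable def dd {n : ℕ} (G : Set (EuclideanSpace ℝ (Fin n))) (x : EuclideanSpace ℝ (Fin n)) : ℝ :=
  Metric.infDist x (frontier G)

noncomputable def jMet {n : ℕ} (G : Set (EuclideanSpace ℝ (Fin n))) (x y : EuclideanSpace ℝ (Fin n)) : ℝ :=
  Real.log (1 + dist x y / min (dd G x) (dd G y))

noncomputable def jStar {n : ℕ} (G : Set (EuclideanSpace ℝ (Fin n))) (x y : EuclideanSpace ℝ (Fin n)) : ℝ :=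
  Real.tanh (jMet G x y / 2)

noncomputable def sMet {n : ℕ} (G : Set (EuclideanSpace ℝ (Fin n))) (x y : EuclideanSpace ℝ (Fin n)) : ℝ :=
  ⨆ z : frontier G, dist x y / (dist x (z : EuclideanSpace ℝ (Fin n)) + dist (z : EuclideanSpace ℝ (Fin n)) y)

noncomputable def pMet {n : ℕ} (G : Set (EuclideanSpace ℝ (Fin n))) (x y : EuclideanSpace ℝ (Fin n)) : ℝ :=
  dist x y / Real.sqrt (dist x y ^ 2 + 4 * dd G x * dd G y)

noncomputable def vMet {n : ℕ} (G : Set (EuclideanSpace ℝ (Fin n))) (x y : EuclideanSpace ℝ (Fin n)) : ℝ :=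
  ⨆ z : frontier G, EuclideanGeometry.angle x (z : EuclideanSpace ℝ (Fin n)) y

open scoped InnerProductSpace

private lemma key_inner {E : Type*} [NormedAddCommGroup E] [InnerProductSpace ℝ E]
    (e X Y : E) (he : ‖e‖ = 1) :
    2 * (⟪e, X⟫_ℝ * ⟪e, Y⟫_ℝ) ≤ ‖X‖ * ‖Y‖ + ⟪X, Y⟫_ℝ := by
  have hee : ⟪e, e⟫_ℝ = 1 := by
    rw [real_inner_self_eq_norm_sq, he]; norm_num
  obtain ⟨a, ha⟩ : ∃ a, a = ⟪e, X⟫_ℝ := ⟨_, rfl⟩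
  obtain ⟨b, hb⟩ : ∃ b, b = ⟪e, Y⟫_ℝ := ⟨_, rfl⟩
  have hXe : ⟪X, e⟫_ℝ = a := by rw [real_inner_comm]; exact ha.symm
  have hYe : ⟪Y, e⟫_ℝ = b := by rw [real_inner_comm]; exact hb.symm
  rw [← ha, ← hb]
  have h1 : ⟪X - a • e, Y - b • e⟫_ℝ = ⟪X, Y⟫_ℝ - a * b := by
    simp only [inner_sub_left, inner_sub_right, real_inner_smul_left,
      real_inner_smul_right, hee, hXe, hYe, ← ha, ← hb]
    ring
  have h2 : ‖X‖ ^ 2 = a ^ 2 + ‖X - a • e‖ ^ 2 := by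
    have h : ⟪X - a • e, X - a • e⟫_ℝ = ⟪X, X⟫_ℝ - a * a := by
      simp only [inner_sub_left, inner_sub_right, real_inner_smul_left,
        real_inner_smul_right, hee, hXe, ← ha]
      ring
    rw [real_inner_self_eq_norm_sq, real_inner_self_eq_norm_sq] at h
    nlinarith [h]
  have h3 : ‖Y‖ ^ 2 = b ^ 2 + ‖Y - b • e‖ ^ 2 := by
    have h : ⟪Y - b • e, Y - b • e⟫_ℝ = ⟪Y, Y⟫_ℝ - b * b := by
      simp only [inner_sub_left, inner_sub_right, real_inner_smul_left,
        real_inner_smul_right, hee, hYe, ← hb]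
      ring
    rw [real_inner_self_eq_norm_sq, real_inner_self_eq_norm_sq] at h
    nlinarith [h]
  have hC : |⟪X - a • e, Y - b • e⟫_ℝ| ≤ ‖X - a • e‖ * ‖Y - b • e‖ :=
    abs_real_inner_le_norm _ _
  have hprod : ‖X‖ ^ 2 * ‖Y‖ ^ 2 = (a ^ 2 + ‖X - a • e‖ ^ 2) * (b ^ 2 + ‖Y - b • e‖ ^ 2) := by
    rw [← h2, ← h3]
  have hsq : (a * b + ‖X - a • e‖ * ‖Y - b • e‖) ^ 2 ≤ (‖X‖ * ‖Y‖) ^ 2 := by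
    nlinarith [sq_nonneg (a * ‖Y - b • e‖ - b * ‖X - a • e‖), hprod]
  have hCS : a * b + ‖X - a • e‖ * ‖Y - b • e‖ ≤ ‖X‖ * ‖Y‖ := by
    have h := Real.sqrt_le_sqrt hsq
    rw [Real.sqrt_sq_eq_abs, Real.sqrt_sq (mul_nonneg (norm_nonneg X) (norm_nonneg Y))] at h
    exact (le_abs_self _).trans h
  have habs := abs_le.mp hC
  linarith [habs.1, h1 ▸ habs.1]

private lemma dd_le_dist_of_not_mem {n : ℕ} {G : Set (EuclideanSpace ℝ (Fin n))}
    (hGne : G ≠ univ) {x p : EuclideanSpace ℝ (Fin n)} (hx : x ∈ G) (hp : p ∉ G) :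
    dd G x ≤ dist x p := by
  obtain ⟨w, hw, hxw⟩ := exists_mem_frontier_infDist_compl_eq_dist hx hGne
  calc dd G x ≤ dist x w := Metric.infDist_le_dist_of_mem hw
    _ = Metric.infDist x Gᶜ := hxw.symm
    _ ≤ dist x p := Metric.infDist_le_dist_of_mem hp

private lemma S_sq {n : ℕ} {G : Set (EuclideanSpace ℝ (Fin n))} (hGo : IsOpen G)
    (hGconv : Convex ℝ G)
    (hGne : G ≠ univ) {x y z : EuclideanSpace ℝ (Fin n)} (hx : x ∈ G) (hy : y ∈ G)
    (hz : z ∈ frontier G) :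
    dist x y ^ 2 + 4 * dd G x * dd G y ≤ (dist x z + dist z y) ^ 2 := by
  have hzG : z ∉ G := by
    rw [hGo.frontier_eq] at hz; exact hz.2
  obtain ⟨f, hf⟩ := geometric_hahn_banach_open_point hGconv hGo hzG
  set u := (InnerProductSpace.toDual ℝ (EuclideanSpace ℝ (Fin n))).symm f with hudef
  have hu : ∀ w, ⟪u, w⟫_ℝ = f w := fun w => InnerProductSpace.toDual_symm_apply
  have hfx : f x < f z := hf x hx
  have hfy : f y < f z := hf y hy
  have hu0 : u ≠ 0 := by
    intro h
    have := hu x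
    have h2 := hu z
    rw [h] at this h2
    simp at this h2
    rw [← this, ← h2] at hfx
    exact lt_irrefl _ hfx
  have hnu : (0:ℝ) < ‖u‖ := norm_pos_iff.mpr hu0
  set e : EuclideanSpace ℝ (Fin n) := ‖u‖⁻¹ • u with hedef
  have he : ‖e‖ = 1 := by
    rw [hedef, norm_smul, norm_inv, norm_norm, inv_mul_cancel₀ hnu.ne']
  have hew : ∀ w, ⟪e, w⟫_ℝ = ‖u‖⁻¹ * f w := fun w => by
    rw [hedef, real_inner_smul_left, hu]
  have hfe : f e = ‖u‖ := by
    have h1 : ⟪u, e⟫_ℝ = f e := hu e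
    rw [hedef, real_inner_smul_right, real_inner_self_eq_norm_sq] at h1
    rw [← h1]; field_simp
  have key : ∀ w : EuclideanSpace ℝ (Fin n), w ∈ G →
      dd G w ≤ ⟪e, z - w⟫_ℝ := by
    intro w hw
    set c := ⟪e, z - w⟫_ℝ with hc
    have hcval : c = ‖u‖⁻¹ * (f z - f w) := by rw [hc, hew, map_sub]
    have hcpos : 0 < c := by
      rw [hcval]
      exact mul_pos (inv_pos.mpr hnu) (sub_pos.mpr (hf w hw))
    have hpf : f (w + c • e) = f z := by
      rw [map_add, map_smul, smul_eq_mul, hfe, hcval]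
      field_simp
      ring
    have hpG : w + c • e ∉ G := fun h => absurd (hf _ h) (by rw [hpf]; exact lt_irrefl _)
    have hdist : dist w (w + c • e) = c := by
      rw [dist_eq_norm]
      simp [norm_smul, he, abs_of_pos hcpos]
    calc dd G w ≤ dist w (w + c • e) := dd_le_dist_of_not_mem hGne hw hpG
      _ = c := hdist
  have hax := key x hx
  have hby := key y hy
  have hkey := key_inner e (z - x) (z - y) he
  have hddx : 0 ≤ dd G x := Metric.infDist_nonneg
  have hddy : 0 ≤ dd G y := Metric.infDist_nonneg
  have haxpos : 0 < ⟪e, z - x⟫_ℝ := by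
    rw [hew, map_sub]
    exact mul_pos (inv_pos.mpr hnu) (sub_pos.mpr hfx)
  have hbypos : 0 < ⟪e, z - y⟫_ℝ := by
    rw [hew, map_sub]
    exact mul_pos (inv_pos.mpr hnu) (sub_pos.mpr hfy)
  have hdxz : dist x z = ‖z - x‖ := by rw [dist_comm, dist_eq_norm]
  have hdzy : dist z y = ‖z - y‖ := by rw [dist_eq_norm]
  have hdxy : dist x y ^ 2 = ‖z - x‖ ^ 2 - 2 * ⟪z - x, z - y⟫_ℝ + ‖z - y‖ ^ 2 := by
    have : dist x y = ‖(z - x) - (z - y)‖ := by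
      rw [dist_eq_norm']; congr 1; abel
    rw [this, norm_sub_sq_real]
  have hmul : dd G x * dd G y ≤ ⟪e, z - x⟫_ℝ * ⟪e, z - y⟫_ℝ :=
    mul_le_mul hax hby hddy haxpos.le
  rw [hdxz, hdzy, hdxy]
  nlinarith [hkey, hmul, norm_nonneg (z - x), norm_nonneg (z - y)]

private lemma tanh_log (s : ℝ) (hs : 0 < s) :
    Real.tanh (Real.log s / 2) = (s - 1) / (s + 1) := by
  have hE : 0 < Real.exp (Real.log s / 2) := Real.exp_pos _
  set E := Real.exp (Real.log s / 2) with hEdef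
  have hE2 : E * E = s := by
    rw [hEdef, ← Real.exp_add,
      show Real.log s / 2 + Real.log s / 2 = Real.log s by ring, Real.exp_log hs]
  have hden : 0 < E + E⁻¹ := by positivity
  rw [Real.tanh_eq_sinh_div_cosh, Real.sinh_eq, Real.cosh_eq, Real.exp_neg, ← hEdef]
  rw [div_div_div_cancel_right₀]
  · field_simp
    nlinarith [hE2]
  · positivity

theorem stmt10 {n : ℕ} (G : Set (EuclideanSpace ℝ (Fin n)))
    (hGo : IsOpen G) (hGconv : Convex ℝ G) (hGne : G ≠ univ) (hGnonempty : G.Nonempty)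
    (x y : EuclideanSpace ℝ (Fin n)) (hx : x ∈ G) (hy : y ∈ G) :
    sMet G x y ≤ Real.sqrt 2 * jStar G x y := by
  have hfr : (frontier G).Nonempty := nonempty_frontier_iff.mpr ⟨hGnonempty, hGne⟩
  haveI : Nonempty (frontier G) := hfr.to_subtype
  have hddpos : ∀ w ∈ G, 0 < dd G w := by
    intro w hw
    refine (IsClosed.notMem_iff_infDist_pos isClosed_frontier hfr).mp ?_
    rw [hGo.frontier_eq]
    exact fun h => h.2 hw
  have hmx : min (dd G x) (dd G y) ≤ dd G x := min_le_left _ _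
  have hmy : min (dd G x) (dd G y) ≤ dd G y := min_le_right _ _
  have hmpos : 0 < min (dd G x) (dd G y) := lt_min (hddpos x hx) (hddpos y hy)
  set m := min (dd G x) (dd G y) with hm
  set d := dist x y with hd
  have hd0 : 0 ≤ d := dist_nonneg
  have hjs : jStar G x y = d / (d + 2 * m) := by
    rw [jStar, jMet, ← hm, ← hd, tanh_log _ (by positivity)]
    rw [show (1 : ℝ) + d / m - 1 = d / m from by ring,
      show (1 : ℝ) + d / m + 1 = 2 + d / m from by ring]
    field_simp
    ring
  rw [hjs, sMet]
  apply ciSup_le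
  intro z
  set S := dist x (z : EuclideanSpace ℝ (Fin n)) + dist (z : EuclideanSpace ℝ (Fin n)) y with hS
  have hSsq : d ^ 2 + 4 * m ^ 2 ≤ S ^ 2 := by
    have h1 := S_sq hGo hGconv hGne hx hy z.2
    rw [← hd, ← hS] at h1
    nlinarith [mul_le_mul hmx hmy hmpos.le (hddpos x hx).le]
  have hS0 : 0 ≤ S := add_nonneg dist_nonneg dist_nonneg
  have hSpos : 0 < S := by nlinarith [hSsq, hmpos]
  have hsqrt2 : (Real.sqrt 2) ^ 2 = 2 := Real.sq_sqrt (by norm_num)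
  have hkey2 : d + 2 * m ≤ Real.sqrt 2 * S := by
    have hsq2 : (d + 2 * m) ^ 2 ≤ (Real.sqrt 2 * S) ^ 2 := by
      rw [mul_pow, hsqrt2]; nlinarith [sq_nonneg (d - 2 * m)]
    have h := Real.sqrt_le_sqrt hsq2
    rw [Real.sqrt_sq (by positivity), Real.sqrt_sq (by positivity)] at h
    exact h
  rw [← mul_div_assoc, div_le_div_iff₀ hSpos (by positivity)]
  calc d * (d + 2 * m) ≤ d * (Real.sqrt 2 * S) := mul_le_mul_of_nonneg_left hkey2 hd0
    _ = Real.sqrt 2 * d * S := by ring
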